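/- arXiv:1810.09338 — 2 statements merged into one kernel-verified Lean document; each statement's English description precedes it below -/
import Mathlib

section
/- Let F ∈ ℂ[x₀, …, x_n] and G ∈ ℂ[y₀, …, y_m] be homogeneous polynomials of the same degree d in disjoint sets of variables, both regarded as elements of ℂ[x₀, …, x_n, y₀, …, y_m]. Then for every integer s with 1 ≤ s ≤ d − 1, the span of the s-th order partial derivatives of F + G is the direct sum of the spans of the s-th order partial derivatives of F and of G; in particular dim H_{∂^s(F+G)} = dim H_{∂^s F} + dim H_{∂^s G}. -/
open MvPolynomial

/-- Iterated partial derivative of a polynomial along a list of variables. -/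
noncomputable def derivList {σ : Type*} (l : List σ) (F : MvPolynomial σ ℂ) :
    MvPolynomial σ ℂ :=
  l.foldl (fun G i => MvPolynomial.pderiv i G) F

/-- `Hspan s F` is the linear span of all `s`-th order partial derivatives of `F`. -/
noncomputable def Hspan {σ : Type*} (s : ℕ) (F : MvPolynomial σ ℂ) :
    Submodule ℂ (MvPolynomial σ ℂ) :=
  Submodule.span ℂ {P | ∃ l : List σ, l.length = s ∧ P = derivList l F}

lemma derivList_cons {σ : Type*} (i : σ) (l : List σ) (F : MvPolynomial σ ℂ) :
    derivList (i :: l) F = derivList l (MvPolynomial.pderiv i F) := rfl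

lemma derivList_add {σ : Type*} (l : List σ) (F G : MvPolynomial σ ℂ) :
    derivList l (F + G) = derivList l F + derivList l G := by
  induction l generalizing F G with
  | nil => rfl
  | cons i l ih => simp [derivList_cons, map_add, ih]

lemma derivList_zero {σ : Type*} (l : List σ) : derivList l (0 : MvPolynomial σ ℂ) = 0 := by
  induction l with
  | nil => rfl
  | cons i l ih => simp [derivList_cons, ih]

lemma pderiv_isHomogeneous {σ : Type*} (i : σ) {p : MvPolynomial σ ℂ} {n : ℕ}
    (h : p.IsHomogeneous n) : (MvPolynomial.pderiv i p).IsHomogeneous (n - 1) := by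
  classical
  rw [← mem_homogeneousSubmodule]
  rw [show p = ∑ v ∈ p.support, monomial v (coeff v p) from p.as_sum]
  rw [map_sum]
  apply Submodule.sum_mem
  intro v hv
  rw [pderiv_monomial, mem_homogeneousSubmodule]
  by_cases hvi : v i = 0
  · simp [hvi, isHomogeneous_zero]
  · apply isHomogeneous_monomial
    have hle : Finsupp.single i 1 ≤ v := Finsupp.single_le_iff.mpr (Nat.one_le_iff_ne_zero.mpr hvi)
    have hdeg : (v - Finsupp.single i 1).degree + 1 = n := by
      have := h (Finsupp.mem_support_iff.mp hv)
      rw [Finsupp.degree_eq_weight_one]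
      have h2 : (v - Finsupp.single i 1) + Finsupp.single i 1 = v := tsub_add_cancel_of_le hle
      calc (Finsupp.weight 1) (v - Finsupp.single i 1) + 1
          = (Finsupp.weight 1) (v - Finsupp.single i 1) +
              (Finsupp.weight 1) (Finsupp.single i 1) := by
            simp [Finsupp.weight_apply, Finsupp.sum_single_index]
        _ = (Finsupp.weight 1) v := by rw [← map_add, h2]
        _ = n := this
    omega

lemma derivList_isHomogeneous {σ : Type*} (l : List σ) {p : MvPolynomial σ ℂ} {n : ℕ}
    (h : p.IsHomogeneous n) : (derivList l p).IsHomogeneous (n - l.length) := by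
  induction l generalizing p n with
  | nil => simpa [derivList] using h
  | cons i l ih =>
    rw [derivList_cons]
    have := ih (pderiv_isHomogeneous i h)
    have he : n - 1 - l.length = n - (i :: l).length := by simp; omega
    rwa [he] at this

lemma derivList_rename_exists {σ τ : Type*} {f : σ → τ} (hf : Function.Injective f)
    (l : List τ) (A : MvPolynomial σ ℂ) :
    ∃ B, derivList l (rename f A) = rename f B := by
  classical
  induction l generalizing A with
  | nil => exact ⟨A, rfl⟩
  | cons i l ih =>
    rw [derivList_cons]
    by_cases hi : i ∈ Set.range f
    · obtain ⟨i₀, rfl⟩ := hi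
      rw [pderiv_rename hf]
      exact ih _
    · have hv : i ∉ (rename f A).vars := fun hmem => by
        have := vars_rename f A hmem
        rw [Finset.mem_image] at this
        obtain ⟨j, _, rfl⟩ := this
        exact hi ⟨j, rfl⟩
      rw [pderiv_eq_zero_of_notMem_vars hv]
      have : rename f (0 : MvPolynomial σ ℂ) = 0 := map_zero _
      exact ⟨0, by rw [derivList_zero, this]⟩

lemma derivList_rename_eq_zero {σ τ : Type*} {f : σ → τ} (hf : Function.Injective f)
    (l : List τ) (A : MvPolynomial σ ℂ) (h : ∃ v ∈ l, v ∉ Set.range f) :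
    derivList l (rename f A) = 0 := by
  classical
  induction l generalizing A with
  | nil => simp at h
  | cons i l ih =>
    rw [derivList_cons]
    by_cases hi : i ∈ Set.range f
    · obtain ⟨i₀, rfl⟩ := hi
      rw [pderiv_rename hf]
      apply ih
      obtain ⟨v, hv, hvr⟩ := h
      rcases List.mem_cons.mp hv with rfl | hvl
      · exact absurd ⟨i₀, rfl⟩ hvr
      · exact ⟨v, hvl, hvr⟩
    · have hv : i ∉ (rename f A).vars := fun hmem => by
        have := vars_rename f A hmem
        rw [Finset.mem_image] at this
        obtain ⟨j, _, rfl⟩ := this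
        exact hi ⟨j, rfl⟩
      rw [pderiv_eq_zero_of_notMem_vars hv, derivList_zero]

lemma hspan_fd {σ : Type*} [Finite σ] (s : ℕ) (F : MvPolynomial σ ℂ) :
    FiniteDimensional ℂ (Hspan s F) := by
  apply FiniteDimensional.span_of_finite
  have he : {P | ∃ l : List σ, l.length = s ∧ P = derivList l F} =
      (fun l => derivList l F) '' {l : List σ | l.length = s} := by
    ext P
    simp only [Set.mem_setOf_eq, Set.mem_image]
    constructor
    · rintro ⟨l, hl, rfl⟩; exact ⟨l, hl, rfl⟩
    · rintro ⟨l, hl, rfl⟩; exact ⟨l, hl, rfl⟩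
  rw [he]
  exact (List.finite_length_eq σ s).image _

/-- Let `F ∈ ℂ[x₀,…,x_n]` and `G ∈ ℂ[y₀,…,y_m]` be homogeneous of the
same degree `d` in disjoint sets of variables, regarded in `ℂ[x₀,…,x_n,y₀,…,y_m]`.
Then for every `1 ≤ s ≤ d - 1` the span of the `s`-th order partial derivatives of
`F + G` is the (internal) direct sum of the spans of the `s`-th order partial
derivatives of `F` and of `G`; in particular the dimensions add up. -/
theorem partials_direct_sum (n m d s : ℕ) (hs0 : 1 ≤ s) (hsd : s ≤ d - 1) (hd : 1 ≤ d)
    (F₀ : MvPolynomial (Fin (n + 1)) ℂ) (G₀ : MvPolynomial (Fin (m + 1)) ℂ)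
    (hF : F₀.IsHomogeneous d) (hG : G₀.IsHomogeneous d)
    (F : MvPolynomial (Fin (n + 1) ⊕ Fin (m + 1)) ℂ)
    (G : MvPolynomial (Fin (n + 1) ⊕ Fin (m + 1)) ℂ)
    (hFdef : F = rename Sum.inl F₀) (hGdef : G = rename Sum.inr G₀) :
    Hspan s (F + G) = Hspan s F ⊔ Hspan s G ∧
      Disjoint (Hspan s F) (Hspan s G) ∧
      Module.finrank ℂ (Hspan s (F + G)) =
        Module.finrank ℂ (Hspan s F) + Module.finrank ℂ (Hspan s G) := by
  classical
  subst hFdef hGdef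
  set σ := Fin (n + 1) ⊕ Fin (m + 1)
  set F : MvPolynomial σ ℂ := rename Sum.inl F₀ with hFdef
  set G : MvPolynomial σ ℂ := rename Sum.inr G₀ with hGdef
  -- sup inequality, F side
  have hleF : Hspan s F ≤ Hspan s (F + G) := by
    rw [Hspan]
    apply Submodule.span_le.mpr
    rintro P ⟨l, hl, rfl⟩
    by_cases hr : ∃ v ∈ l, ∃ j, v = Sum.inr j
    · have h0 : derivList l F = 0 := by
        apply derivList_rename_eq_zero Sum.inl_injective
        obtain ⟨v, hv, j, rfl⟩ := hr
        exact ⟨Sum.inr j, hv, by rintro ⟨i, hi⟩; exact Sum.inl_ne_inr hi⟩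
      rw [h0]; exact Submodule.zero_mem _
    · push_neg at hr
      have hne : l ≠ [] := by
        intro h; rw [h] at hl; simp at hl; omega
      obtain ⟨v, hv⟩ := List.exists_mem_of_ne_nil l hne
      have h0 : derivList l G = 0 := by
        apply derivList_rename_eq_zero Sum.inr_injective
        refine ⟨v, hv, ?_⟩
        cases v with
        | inl i => rintro ⟨j, hj⟩; exact Sum.inr_ne_inl hj
        | inr j => exact absurd rfl (hr _ hv j)
      have heq : derivList l (F + G) = derivList l F := by
        rw [derivList_add, h0, add_zero]
      exact Submodule.subset_span ⟨l, hl, heq.symm⟩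
  -- sup inequality, G side
  have hleG : Hspan s G ≤ Hspan s (F + G) := by
    rw [Hspan]
    apply Submodule.span_le.mpr
    rintro P ⟨l, hl, rfl⟩
    by_cases hr : ∃ v ∈ l, ∃ i, v = Sum.inl i
    · have h0 : derivList l G = 0 := by
        apply derivList_rename_eq_zero Sum.inr_injective
        obtain ⟨v, hv, i, rfl⟩ := hr
        exact ⟨Sum.inl i, hv, by rintro ⟨j, hj⟩; exact Sum.inr_ne_inl hj⟩
      rw [h0]; exact Submodule.zero_mem _
    · push_neg at hr
      have hne : l ≠ [] := by
        intro h; rw [h] at hl; simp at hl; omega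
      obtain ⟨v, hv⟩ := List.exists_mem_of_ne_nil l hne
      have h0 : derivList l F = 0 := by
        apply derivList_rename_eq_zero Sum.inl_injective
        refine ⟨v, hv, ?_⟩
        cases v with
        | inl i => exact absurd rfl (hr _ hv i)
        | inr j => rintro ⟨i, hi⟩; exact Sum.inl_ne_inr hi
      have heq : derivList l (F + G) = derivList l G := by
        rw [derivList_add, h0, zero_add]
      exact Submodule.subset_span ⟨l, hl, heq.symm⟩
  have hsup : Hspan s (F + G) = Hspan s F ⊔ Hspan s G := by
    apply le_antisymm
    · rw [Hspan]
      apply Submodule.span_le.mpr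
      rintro P ⟨l, hl, rfl⟩
      rw [derivList_add]
      exact Submodule.add_mem _
        (Submodule.mem_sup_left (Submodule.subset_span ⟨l, hl, rfl⟩))
        (Submodule.mem_sup_right (Submodule.subset_span ⟨l, hl, rfl⟩))
    · exact sup_le hleF hleG
  -- disjointness
  have hds : 1 ≤ d - s := by omega
  have hFle : Hspan s F ≤
      (LinearMap.range (rename (R := ℂ) (Sum.inl : Fin (n+1) → σ)).toLinearMap) ⊓
        homogeneousSubmodule σ ℂ (d - s) := by
    rw [Hspan]
    apply Submodule.span_le.mpr
    rintro P ⟨l, hl, rfl⟩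
    obtain ⟨B, hB⟩ := derivList_rename_exists Sum.inl_injective l F₀
    refine ⟨⟨B, hB.symm⟩, ?_⟩
    have hh := derivList_isHomogeneous l (hF.rename_isHomogeneous (f := Sum.inl))
    rw [hl] at hh
    exact hh
  have hGle : Hspan s G ≤
      (LinearMap.range (rename (R := ℂ) (Sum.inr : Fin (m+1) → σ)).toLinearMap) ⊓
        homogeneousSubmodule σ ℂ (d - s) := by
    rw [Hspan]
    apply Submodule.span_le.mpr
    rintro P ⟨l, hl, rfl⟩
    obtain ⟨B, hB⟩ := derivList_rename_exists Sum.inr_injective l G₀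
    refine ⟨⟨B, hB.symm⟩, ?_⟩
    have hh := derivList_isHomogeneous l (hG.rename_isHomogeneous (f := Sum.inr))
    rw [hl] at hh
    exact hh
  have hbig : Disjoint
      ((LinearMap.range (rename (R := ℂ) (Sum.inl : Fin (n+1) → σ)).toLinearMap) ⊓
        homogeneousSubmodule σ ℂ (d - s))
      ((LinearMap.range (rename (R := ℂ) (Sum.inr : Fin (m+1) → σ)).toLinearMap) ⊓
        homogeneousSubmodule σ ℂ (d - s)) := by
    rw [Submodule.disjoint_def]
    rintro x ⟨⟨A, hA⟩, hhom⟩ ⟨⟨B, hB⟩, _⟩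
    rw [AlgHom.toLinearMap_apply] at hA hB
    have hhom' : x.IsHomogeneous (d - s) := hhom
    ext μ
    rw [coeff_zero]
    by_contra hc
    have hdeg := hhom' hc
    have hμ : μ ≠ 0 := by
      intro h
      rw [h, map_zero] at hdeg
      omega
    obtain ⟨v, hv⟩ := Finsupp.ne_iff.mp hμ
    rw [Finsupp.coe_zero, Pi.zero_apply] at hv
    have hvvars : v ∈ x.vars :=
      (mem_vars v).mpr ⟨μ, mem_support_iff.mpr hc, Finsupp.mem_support_iff.mpr hv⟩
    cases v with
    | inl i =>
      rw [← hB] at hvvars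
      have := vars_rename Sum.inr B hvvars
      rw [Finset.mem_image] at this
      obtain ⟨j, _, hj⟩ := this
      exact Sum.inr_ne_inl hj
    | inr j =>
      rw [← hA] at hvvars
      have := vars_rename Sum.inl A hvvars
      rw [Finset.mem_image] at this
      obtain ⟨i, _, hi⟩ := this
      exact Sum.inl_ne_inr hi
  have hdisj : Disjoint (Hspan s F) (Hspan s G) := hbig.mono hFle hGle
  refine ⟨hsup, hdisj, ?_⟩
  haveI := hspan_fd s F
  haveI := hspan_fd s G
  have hrk := Submodule.finrank_sup_add_finrank_inf_eq (Hspan s F) (Hspan s G)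
  rw [hdisj.eq_bot, finrank_bot, add_zero] at hrk
  rw [hsup]
  exact hrk
end

section
/- For every integer n with 2 ≤ n ≤ 30, there exist linear forms L₁, …, L_{n+1} ∈ ℂ[x₀, …, x_n]₁ such that, setting F = L₁³ + ⋯ + L_{n+1}³, the quartic x₀F satisfies dim H_{∂²(x₀F)} ≥ 2n + 1; that is, the second catalecticant matrix of x₀F has rank at least 2(n+1) − 1. -/
open MvPolynomial

lemma pderiv_ofNat {n : ℕ} (i : Fin (n+1)) (k : ℕ) [k.AtLeastTwo] :
    pderiv i (OfNat.ofNat k : MvPolynomial (Fin (n+1)) ℂ) = 0 := by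
  rw [← map_ofNat (C : ℂ →+* MvPolynomial (Fin (n+1)) ℂ) k, pderiv_C]

lemma pderivSum (n : ℕ) (j : Fin (n+1)) :
    pderiv j (∑ i, (X i : MvPolynomial (Fin (n+1)) ℂ)^3) = 3 * X j ^ 2 := by
  rw [map_sum, Finset.sum_eq_single j]
  · simp [pderiv_pow]
  · intro i _ hij; simp [pderiv_pow, pderiv_X_of_ne hij]
  · simp

lemma derivList_pair {n : ℕ} (a b : Fin (n+1)) (F : MvPolynomial (Fin (n+1)) ℂ) :
    derivList [a, b] F = pderiv b (pderiv a F) := rfl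

lemma deriv00 (n : ℕ) :
    derivList [0, 0] (X 0 * ∑ i, (X i : MvPolynomial (Fin (n+1)) ℂ)^3)
      = C 12 * X 0 ^ 2 := by
  rw [derivList_pair, pderiv_mul, pderivSum, pderiv_X_self, map_add, pderiv_mul, pderiv_mul,
    pderivSum, pderiv_X_self, pderiv_one, pderiv_mul, pderiv_pow, pderiv_X_self, pderiv_ofNat,
    map_ofNat]
  ring

lemma deriv0j (n : ℕ) (j : Fin (n+1)) (hj : j ≠ 0) :
    derivList [0, j] (X 0 * ∑ i, (X i : MvPolynomial (Fin (n+1)) ℂ)^3)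
      = C 3 * X j ^ 2 := by
  rw [derivList_pair, pderiv_mul, pderivSum, pderiv_X_self, map_add, pderiv_mul, pderiv_mul,
    pderivSum, pderiv_one, pderiv_mul, pderiv_pow, pderiv_ofNat, pderiv_X_of_ne hj.symm,
    map_ofNat]
  ring

lemma derivjj (n : ℕ) (j : Fin (n+1)) (hj : j ≠ 0) :
    derivList [j, j] (X 0 * ∑ i, (X i : MvPolynomial (Fin (n+1)) ℂ)^3)
      = C 6 * (X 0 * X j) := by
  rw [derivList_pair, pderiv_mul, pderivSum, pderiv_X_of_ne hj.symm, map_add, pderiv_mul,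
    pderiv_mul, pderivSum, pderiv_X_of_ne hj.symm, pderiv_mul, pderiv_ofNat, pderiv_pow,
    pderiv_X_self, map_ofNat, map_zero]
  ring

/-- If a nonzero scalar multiple of `p` is a second derivative of `F`, then `p ∈ Hspan 2 F`. -/
lemma mem_Hspan_of_scaled {n : ℕ} {F p : MvPolynomial (Fin (n+1)) ℂ} {c : ℂ} (hc : c ≠ 0)
    (l : List (Fin (n+1))) (hl : l.length = 2) (h : derivList l F = C c * p) :
    p ∈ Hspan 2 F := by
  have hmem : derivList l F ∈ Hspan 2 F :=
    Submodule.subset_span ⟨l, hl, rfl⟩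
  have := Submodule.smul_mem (Hspan 2 F) c⁻¹ hmem
  rwa [h, show c⁻¹ • (C c * p) = p by
    rw [C_mul', smul_smul, inv_mul_cancel₀ hc, one_smul]] at this

/-- **certificate for Comon's conjecture for cubics, `2 ≤ n ≤ 30`.**
For every `2 ≤ n ≤ 30` there are linear forms `L₁, …, L_{n+1}` in `ℂ[x₀,…,x_n]` such
that, with `F = L₁³ + ⋯ + L_{n+1}³`, the second catalecticant of the quartic `x₀F` has
rank at least `2(n+1) - 1 = 2n + 1`. -/
theorem cubic_certificate (n : ℕ) (h2 : 2 ≤ n) (h30 : n ≤ 30) :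
    ∃ L : Fin (n + 1) → MvPolynomial (Fin (n + 1)) ℂ,
      (∀ i, (L i).IsHomogeneous 1) ∧
      2 * n + 1 ≤ Module.finrank ℂ (Hspan 2 (X 0 * ∑ i, (L i) ^ 3)) := by
  refine ⟨fun i => X i, fun i => isHomogeneous_X _ _, ?_⟩
  set G : MvPolynomial (Fin (n+1)) ℂ := X 0 * ∑ i, (X i)^3 with hG
  -- exponent vectors
  let e : Fin (n+1) ⊕ Fin n → (Fin (n+1) →₀ ℕ) := fun j =>
    Sum.rec (fun k => Finsupp.single k 2)
      (fun i => Finsupp.single 0 1 + Finsupp.single i.succ 1) j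
  have he : Function.Injective e := by
    rintro (k | i) (k' | i') h
    · have hkk : k = k' := Finsupp.single_left_injective (by norm_num : (2:ℕ) ≠ 0) h
      rw [hkk]
    · exfalso
      have h0 := DFunLike.congr_fun h (0 : Fin (n+1))
      simp only [e, Finsupp.add_apply, Finsupp.single_apply] at h0
      split_ifs at h0 <;> simp_all [Fin.succ_ne_zero]
    · exfalso
      have h0 := DFunLike.congr_fun h (0 : Fin (n+1))
      simp only [e, Finsupp.add_apply, Finsupp.single_apply] at h0
      split_ifs at h0 <;> simp_all [Fin.succ_ne_zero]
    · have := add_left_cancel h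
      have := Finsupp.single_left_injective (by norm_num : (1:ℕ) ≠ 0) this
      exact congrArg Sum.inr (Fin.succ_injective _ this)
  -- the monomial family
  let v : Fin (n+1) ⊕ Fin n → MvPolynomial (Fin (n+1)) ℂ := fun j => monomial (e j) 1
  have hv : LinearIndependent ℂ v := by
    have hb := (basisMonomials (Fin (n+1)) ℂ).linearIndependent
    have : v = (basisMonomials (Fin (n+1)) ℂ) ∘ e := by
      funext j; simp [v, coe_basisMonomials]
    rw [this]
    exact hb.comp e he
  -- each member of the family lies in Hspan 2 G
  have hmem : ∀ j, v j ∈ Hspan 2 G := by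
    rintro (k | i)
    · rcases eq_or_ne k (0 : Fin (n+1)) with hk | hk
      · refine mem_Hspan_of_scaled (by norm_num : (12:ℂ) ≠ 0) [0,0] rfl ?_
        rw [deriv00]
        simp [v, e, hk, X_pow_eq_monomial]
      · refine mem_Hspan_of_scaled (by norm_num : (3:ℂ) ≠ 0) [0,k] rfl ?_
        rw [deriv0j n k hk]
        simp [v, e, X_pow_eq_monomial]
    · refine mem_Hspan_of_scaled (by norm_num : (6:ℂ) ≠ 0) [i.succ, i.succ] rfl ?_
      rw [derivjj n i.succ (Fin.succ_ne_zero i)]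
      congr 1
      rw [X, X, monomial_mul, one_mul]
  -- Hspan 2 G is finite dimensional
  have hfin : FiniteDimensional ℂ (Hspan 2 G) := by
    apply FiniteDimensional.span_of_finite
    have : {P | ∃ l : List (Fin (n+1)), l.length = 2 ∧ P = derivList l G} ⊆
        (fun l => derivList l G) '' {l | l.length = 2} := by
      rintro P ⟨l, hl, rfl⟩; exact ⟨l, hl, rfl⟩
    exact ((List.finite_length_eq _ 2).image _).subset this
  -- conclude
  let w : Fin (n+1) ⊕ Fin n → (Hspan 2 G) := fun j => ⟨v j, hmem j⟩
  have hw : LinearIndependent ℂ w := by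
    apply LinearIndependent.of_comp (Hspan 2 G).subtype
    exact hv
  have := hw.fintype_card_le_finrank
  simp only [Fintype.card_sum, Fintype.card_fin] at this
  omega
end
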